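/- Let X and Y be finite sets, π a pmf on X, L a likelihood with L(·|x) a pmf on Y, with positive marginal m(y) = Σ_x L(y|x)π(x); let P(x|y) = L(y|x)π(x)/m(y) be the Bayes posterior and q(x,y,x★) = P(x|y)·L(y|x★)·π(x★) the planted ensemble. Fix an observable O : X → ℝ and write ⟨O⟩_y := Σ_x O(x)P(x|y) and ⟨O²⟩_y := Σ_x O(x)²P(x|y). Define the posterior variance δO² := Σ_{y,x★} L(y|x★)π(x★)·(⟨O²⟩_y − ⟨O⟩_y²), the mean-squared error of the posterior mean MSEM := Σ_{y,x★} L(y|x★)π(x★)·(⟨O⟩_y − O(x★))², and the mean-squared error on the planted ensemble MSE := Σ_{x,y,x★} q(x,y,x★)·(O(x) − O(x★))². Then at Bayes optimality δO² = MSEM = (1/2)·MSE. -/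

import Mathlib

open Finset

/-- **Moment relations at Bayes optimality.**
For a finite Bayes-optimal teacher–student inference problem (prior `π`, likelihood `L`,
positive marginal `m`, Bayes posterior `P`, planted ensemble `q`) and an observable `O`,
the averaged posterior variance `δO²` equals the mean-squared error of the posterior
mean `MSEM`, which equals half of the mean-squared error `MSE` on the planted ensemble. -/
theorem bayes_optimal_moment_relations
    {X Y : Type*} [Fintype X] [Fintype Y]
    (π : X → ℝ) (L : X → Y → ℝ) (O : X → ℝ)
    (hπ0 : ∀ x, 0 ≤ π x) (hπ1 : ∑ x, π x = 1)
    (hL0 : ∀ x y, 0 ≤ L x y) (hL1 : ∀ x, ∑ y, L x y = 1)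
    (m : Y → ℝ) (hm : ∀ y, m y = ∑ x, L x y * π x) (hmpos : ∀ y, 0 < m y)
    (P : X → Y → ℝ) (hP : ∀ x y, P x y = L x y * π x / m y)
    (q : X → Y → X → ℝ) (hq : ∀ x y xs, q x y xs = P x y * L xs y * π xs)
    (mean1 : Y → ℝ) (hmean1 : ∀ y, mean1 y = ∑ x, O x * P x y)
    (mean2 : Y → ℝ) (hmean2 : ∀ y, mean2 y = ∑ x, (O x) ^ 2 * P x y)
    (δO2 MSEM MSE : ℝ)
    (hδ : δO2 = ∑ y, ∑ xs, L xs y * π xs * (mean2 y - (mean1 y) ^ 2))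
    (hMSEM : MSEM = ∑ y, ∑ xs, L xs y * π xs * (mean1 y - O xs) ^ 2)
    (hMSE : MSE = ∑ x, ∑ y, ∑ xs, q x y xs * (O x - O xs) ^ 2) :
    δO2 = MSEM ∧ δO2 = (1 / 2) * MSE := by

  have hmne : ∀ y, m y ≠ 0 := fun y => (hmpos y).ne'
  -- key identities
  have h0 : ∀ y : Y, (∑ xs, L xs y * π xs) = m y := fun y => (hm y).symm
  have h1 : ∀ y : Y, (∑ xs, L xs y * π xs * O xs) = m y * mean1 y := by
    intro y
    rw [hmean1, Finset.mul_sum]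
    refine Finset.sum_congr rfl fun x _ => ?_
    rw [hP]
    field_simp
    rw [mul_div_cancel_right₀ _ (hmne y)]
  have h2 : ∀ y : Y, (∑ xs, L xs y * π xs * (O xs) ^ 2) = m y * mean2 y := by
    intro y
    rw [hmean2, Finset.mul_sum]
    refine Finset.sum_congr rfl fun x _ => ?_
    rw [hP]
    field_simp
    rw [mul_div_cancel_right₀ _ (hmne y)]
  have hPsum : ∀ y : Y, (∑ x, P x y) = 1 := by
    intro y
    have : (∑ x, P x y) = (∑ x, L x y * π x) / m y := by
      rw [Finset.sum_div]
      exact Finset.sum_congr rfl fun x _ => hP x y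
    rw [this, ← hm y, div_self (hmne y)]
  have hδ' : δO2 = ∑ y, m y * (mean2 y - (mean1 y) ^ 2) := by
    rw [hδ]
    refine Finset.sum_congr rfl fun y _ => ?_
    rw [← Finset.sum_mul, h0 y]
  have hMSEM' : MSEM = ∑ y, m y * (mean2 y - (mean1 y) ^ 2) := by
    rw [hMSEM]
    refine Finset.sum_congr rfl fun y _ => ?_
    have expand : ∀ xs : X, L xs y * π xs * (mean1 y - O xs) ^ 2
        = L xs y * π xs * (mean1 y)^2 - 2 * mean1 y * (L xs y * π xs * O xs)
          + L xs y * π xs * (O xs)^2 := fun xs => by ring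
    simp_rw [expand]
    rw [Finset.sum_add_distrib, Finset.sum_sub_distrib, ← Finset.sum_mul,
      ← Finset.mul_sum, h0 y, h1 y, h2 y]
    ring
  have hMSE' : MSE = ∑ y, 2 * (m y * (mean2 y - (mean1 y) ^ 2)) := by
    rw [hMSE, Finset.sum_comm]
    refine Finset.sum_congr rfl fun y _ => ?_
    have inner : ∀ x : X, (∑ xs, q x y xs * (O x - O xs) ^ 2)
        = P x y * ((O x)^2 * m y - 2 * O x * (m y * mean1 y) + m y * mean2 y) := by
      intro x
      have expand : ∀ xs : X, q x y xs * (O x - O xs) ^ 2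
          = P x y * ((O x)^2 * (L xs y * π xs) - 2 * O x * (L xs y * π xs * O xs)
            + L xs y * π xs * (O xs)^2) := fun xs => by rw [hq]; ring
      simp_rw [expand, ← Finset.mul_sum]
      congr 1
      rw [Finset.sum_add_distrib, Finset.sum_sub_distrib, ← Finset.mul_sum,
        ← Finset.mul_sum, h0 y, h1 y, h2 y]
    simp_rw [inner]
    have expand2 : ∀ x : X, P x y * ((O x)^2 * m y - 2 * O x * (m y * mean1 y) + m y * mean2 y)
        = m y * ((O x)^2 * P x y) - 2 * m y * mean1 y * (O x * P x y) + m y * mean2 y * P x y := fun x => by ring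
    simp_rw [expand2]
    rw [Finset.sum_add_distrib, Finset.sum_sub_distrib, ← Finset.mul_sum, ← Finset.mul_sum,
      ← Finset.mul_sum, hPsum y, ← hmean1 y, ← hmean2 y]
    ring
  refine ⟨by rw [hδ', hMSEM'], ?_⟩
  rw [hδ', hMSE', ← Finset.mul_sum]
  ring
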